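/- Consider the distribution on ℝ⁶ with coordinates (t, u, v, u₁, u₂, v₁) annihilated by the one-forms du − u₁ dt, du₁ − u₂ dt, dv − v₁ dt (the Cartan distribution on J^{2,1}(ℝ, ℝ²)). This distribution D has rank 3, [D,D] has rank 5, [D,[D,D]] = Tℝ⁶, and D is degenerated parabolic: the associated symmetric form (a_{ij}) is identically zero. -/
import Mathlib


/-- The Lie bracket of vector fields on `ℝ⁶`. -/
noncomputable def vfLie {E : Type*} [NormedAddCommGroup E] [NormedSpace ℝ E]
    (V W : E → E) : E → E :=
  fun x => fderiv ℝ W x (V x) - fderiv ℝ V x (W x)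

/- Coordinates on `J^{2,1}(ℝ,ℝ²) ≅ ℝ⁶`: `p 0 = t, p 1 = u, p 2 = v, p 3 = u₁,
p 4 = u₂, p 5 = v₁`.  The Cartan distribution is spanned by
`Y = ∂_t + u₁∂_u + u₂∂_{u₁} + v₁∂_v`, `X₁ = ∂_{u₂}`, `X₂ = ∂_{v₁}`. -/

def Ycartan : (Fin 6 → ℝ) → (Fin 6 → ℝ) := fun p => ![1, p 3, p 5, p 4, 0, 0]
def X1cartan : (Fin 6 → ℝ) → (Fin 6 → ℝ) := fun _ => ![0, 0, 0, 0, 1, 0]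
def X2cartan : (Fin 6 → ℝ) → (Fin 6 → ℝ) := fun _ => ![0, 0, 0, 0, 0, 1]

section vec
variable {α : Type*} (a b c d e f : α)
lemma v0 : ![a,b,c,d,e,f] 0 = a := rfl
lemma v1 : ![a,b,c,d,e,f] 1 = b := rfl
lemma v2 : ![a,b,c,d,e,f] 2 = c := rfl
lemma v3 : ![a,b,c,d,e,f] 3 = d := rfl
lemma v4 : ![a,b,c,d,e,f] 4 = e := rfl
lemma v5 : ![a,b,c,d,e,f] 5 = f := rfl
end vec

noncomputable def Lmap : (Fin 6 → ℝ) →L[ℝ] (Fin 6 → ℝ) :=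
  LinearMap.toContinuousLinearMap
  { toFun := fun v => ![0, v 3, v 5, v 4, 0, 0]
    map_add' := by
      intro x y; funext i
      fin_cases i <;> simp [Matrix.cons_val_zero', Matrix.cons_val_succ', v0, v1, v2, v3, v4, v5]
    map_smul' := by
      intro a x; funext i
      fin_cases i <;> simp [Matrix.cons_val_zero', Matrix.cons_val_succ', v0, v1, v2, v3, v4, v5] }

lemma Lmap_apply (v : Fin 6 → ℝ) : Lmap v = ![0, v 3, v 5, v 4, 0, 0] := rfl

lemma fderiv_Y (p : Fin 6 → ℝ) : fderiv ℝ Ycartan p = Lmap := by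
  have he : Ycartan = fun q => ![(1:ℝ),0,0,0,0,0] + Lmap q := by
    funext q i
    fin_cases i <;>
      simp [Ycartan, Lmap_apply, Matrix.cons_val_zero', Matrix.cons_val_succ', v0, v1, v2, v3, v4, v5]
  have h : HasFDerivAt Ycartan Lmap p := by
    rw [he]; exact (Lmap.hasFDerivAt).const_add _
  exact h.fderiv

lemma vfLie_const_const (a b : Fin 6 → ℝ) :
    vfLie (fun _ => a) (fun _ => b) = fun _ => 0 := by
  funext p; simp [vfLie]

lemma vfLie_const_Y (a : Fin 6 → ℝ) :
    vfLie (fun _ => a) Ycartan = fun _ => ![0, a 3, a 5, a 4, 0, 0] := by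
  funext p; simp [vfLie, fderiv_Y, Lmap_apply]

lemma vfLie_Y_const (a : Fin 6 → ℝ) :
    vfLie Ycartan (fun _ => a) = fun _ => -![0, a 3, a 5, a 4, 0, 0] := by
  funext p; simp [vfLie, fderiv_Y, Lmap_apply]

lemma hX1X2 : vfLie X1cartan X2cartan = fun _ => 0 := vfLie_const_const _ _
lemma hX1Y : vfLie X1cartan Ycartan = fun _ => ![0,0,0,1,0,0] := by
  have := vfLie_const_Y ![0,0,0,0,1,0]
  rw [show X1cartan = (fun _ => ![(0:ℝ),0,0,0,1,0]) from rfl, this]; simp [v3, v4, v5]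
lemma hX2Y : vfLie X2cartan Ycartan = fun _ => ![0,0,1,0,0,0] := by
  have := vfLie_const_Y ![0,0,0,0,0,1]
  rw [show X2cartan = (fun _ => ![(0:ℝ),0,0,0,0,1]) from rfl, this]; simp [v3, v4, v5]
lemma hYX1 : vfLie Ycartan X1cartan = fun _ => -![0,0,0,1,0,0] := by
  have := vfLie_Y_const ![0,0,0,0,1,0]
  rw [show X1cartan = (fun _ => ![(0:ℝ),0,0,0,1,0]) from rfl, this]; simp [v3, v4, v5]
lemma hYX2 : vfLie Ycartan X2cartan = fun _ => -![0,0,1,0,0,0] := by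
  have := vfLie_Y_const ![0,0,0,0,0,1]
  rw [show X2cartan = (fun _ => ![(0:ℝ),0,0,0,0,1]) from rfl, this]; simp [v3, v4, v5]
lemma hYX1Y : vfLie Ycartan (vfLie X1cartan Ycartan) = fun _ => -![0,1,0,0,0,0] := by
  rw [hX1Y, vfLie_Y_const]; simp [v3, v4, v5]
lemma hYX2Y : vfLie Ycartan (vfLie X2cartan Ycartan) = fun _ => 0 := by
  rw [hX2Y, vfLie_Y_const]; funext q i
  fin_cases i <;>
    simp [Matrix.cons_val_zero', Matrix.cons_val_succ', v3, v4, v5,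
      Matrix.vecHead, Matrix.vecTail]
lemma hYX1X2 : vfLie Ycartan (vfLie X1cartan X2cartan) = fun _ => 0 := by
  rw [hX1X2]
  have h := vfLie_Y_const (0 : Fin 6 → ℝ)
  rw [h]
  funext q i
  fin_cases i <;>
    simp [Matrix.cons_val_zero', Matrix.cons_val_succ', v0, v1, v2, v3, v4, v5,
      Matrix.vecHead, Matrix.vecTail]
lemma hX1_X1Y : vfLie X1cartan (vfLie X1cartan Ycartan) = fun _ => 0 := by
  rw [hX1Y]; exact vfLie_const_const _ _
lemma hX1_X2Y : vfLie X1cartan (vfLie X2cartan Ycartan) = fun _ => 0 := by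
  rw [hX2Y]; exact vfLie_const_const _ _
lemma hX2_X1Y : vfLie X2cartan (vfLie X1cartan Ycartan) = fun _ => 0 := by
  rw [hX1Y]; exact vfLie_const_const _ _
lemma hX2_X2Y : vfLie X2cartan (vfLie X2cartan Ycartan) = fun _ => 0 := by
  rw [hX2Y]; exact vfLie_const_const _ _
lemma hX1_X1X2 : vfLie X1cartan (vfLie X1cartan X2cartan) = fun _ => 0 := by
  rw [hX1X2]; exact vfLie_const_const _ (0 : Fin 6 → ℝ)
lemma hX2_X1X2 : vfLie X2cartan (vfLie X1cartan X2cartan) = fun _ => 0 := by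
  rw [hX1X2]; exact vfLie_const_const _ (0 : Fin 6 → ℝ)
lemma hX1_YX1 : vfLie X1cartan (vfLie Ycartan X1cartan) = fun _ => 0 := by
  rw [hYX1]; exact vfLie_const_const _ _
lemma hX1_YX2 : vfLie X1cartan (vfLie Ycartan X2cartan) = fun _ => 0 := by
  rw [hYX2]; exact vfLie_const_const _ _
lemma hX2_YX1 : vfLie X2cartan (vfLie Ycartan X1cartan) = fun _ => 0 := by
  rw [hYX1]; exact vfLie_const_const _ _
lemma hX2_YX2 : vfLie X2cartan (vfLie Ycartan X2cartan) = fun _ => 0 := by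
  rw [hYX2]; exact vfLie_const_const _ _



/-- Theorem 1 (model): the Cartan distribution `D` on `J^{2,1}(ℝ,ℝ²)`, annihilated by
`du − u₁dt, du₁ − u₂dt, dv − v₁dt`, has rank 3, `[D,D]` has rank 5,
`[D,[D,D]] = Tℝ⁶`, and `D` is degenerated parabolic: all `[Xᵢ, Yⱼ]`, `Yⱼ = [Y,Xⱼ]`,
lie in `[D,D]`, i.e. the form `(a_{ij})` vanishes identically. -/
theorem stmt_14 :
    (∀ p w : Fin 6 → ℝ,
      (w ∈ Submodule.span ℝ {X1cartan p, X2cartan p, Ycartan p} ↔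
        (w 1 - p 3 * w 0 = 0 ∧ w 3 - p 4 * w 0 = 0 ∧ w 2 - p 5 * w 0 = 0))) ∧
    (∀ p, LinearIndependent ℝ ![X1cartan p, X2cartan p, Ycartan p]) ∧
    (∀ p, Module.finrank ℝ (Submodule.span ℝ
      ({X1cartan p, X2cartan p, Ycartan p, vfLie X1cartan X2cartan p,
        vfLie X1cartan Ycartan p, vfLie X2cartan Ycartan p} : Set (Fin 6 → ℝ))) = 5) ∧
    (∀ p, Submodule.span ℝ
      ({X1cartan p, X2cartan p, Ycartan p, vfLie X1cartan X2cartan p,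
        vfLie X1cartan Ycartan p, vfLie X2cartan Ycartan p,
        vfLie X1cartan (vfLie X1cartan X2cartan) p,
        vfLie X1cartan (vfLie X1cartan Ycartan) p,
        vfLie X1cartan (vfLie X2cartan Ycartan) p,
        vfLie X2cartan (vfLie X1cartan X2cartan) p,
        vfLie X2cartan (vfLie X1cartan Ycartan) p,
        vfLie X2cartan (vfLie X2cartan Ycartan) p,
        vfLie Ycartan (vfLie X1cartan X2cartan) p,
        vfLie Ycartan (vfLie X1cartan Ycartan) p,
        vfLie Ycartan (vfLie X2cartan Ycartan) p} : Set (Fin 6 → ℝ)) = ⊤) ∧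
    (∀ (i j : Fin 2) p, vfLie (![X1cartan, X2cartan] i)
        (vfLie Ycartan (![X1cartan, X2cartan] j)) p ∈
      Submodule.span ℝ {X1cartan p, X2cartan p, Ycartan p,
        vfLie Ycartan X1cartan p, vfLie Ycartan X2cartan p}) := by
  refine ⟨?part1, ?part2, ?part3, ?part4, ?part5⟩
  case part1 =>
    intro p w
    constructor
    · intro hw
      induction hw using Submodule.span_induction with
      | mem x hx =>
        simp only [Set.mem_insert_iff, Set.mem_singleton_iff] at hx
        rcases hx with rfl | rfl | rfl <;>
          simp [X1cartan, X2cartan, Ycartan, v0, v1, v2, v3, v4, v5]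
      | zero => simp
      | add x y hx hy ihx ihy =>
        refine ⟨?_, ?_, ?_⟩ <;> simp only [Pi.add_apply]
        · linear_combination ihx.1 + ihy.1
        · linear_combination ihx.2.1 + ihy.2.1
        · linear_combination ihx.2.2 + ihy.2.2
      | smul a x hx ih =>
        refine ⟨?_, ?_, ?_⟩ <;> simp only [Pi.smul_apply, smul_eq_mul]
        · linear_combination a * ih.1
        · linear_combination a * ih.2.1
        · linear_combination a * ih.2.2
    · rintro ⟨h1, h2, h3⟩
      have hw : w = w 4 • X1cartan p + w 5 • X2cartan p + w 0 • Ycartan p := by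
        funext i
        fin_cases i <;>
          simp [X1cartan, X2cartan, Ycartan, v0, v1, v2, v3, v4, v5] <;> linarith
      rw [hw]
      refine Submodule.add_mem _ (Submodule.add_mem _ ?_ ?_) ?_ <;>
        exact Submodule.smul_mem _ _ (Submodule.subset_span (by simp))
  case part2 =>
    intro p
    rw [Fintype.linearIndependent_iff]
    intro g hg
    have h0 := congrFun hg 0
    have h4 := congrFun hg 4
    have h5 := congrFun hg 5
    simp [Fin.sum_univ_three, X1cartan, X2cartan, Ycartan,
      v0, v1, v2, v3, v4, v5, Matrix.vecHead, Matrix.vecTail] at h0 h4 h5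
    intro i
    fin_cases i
    · exact h4
    · exact h5
    · exact h0
  case part3 =>
    intro p
    have hs : ({X1cartan p, X2cartan p, Ycartan p, vfLie X1cartan X2cartan p,
        vfLie X1cartan Ycartan p, vfLie X2cartan Ycartan p} : Set (Fin 6 → ℝ)) =
        insert (0 : Fin 6 → ℝ)
          {Ycartan p, ![0,0,1,0,0,0], ![0,0,0,1,0,0], ![0,0,0,0,1,0], ![0,0,0,0,0,1]} := by
      simp only [hX1X2, hX1Y, hX2Y, X1cartan, X2cartan]
      ext x
      simp only [Set.mem_insert_iff, Set.mem_singleton_iff]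
      tauto
    rw [hs, Submodule.span_insert_zero]
    have hr : ({Ycartan p, ![0,0,1,0,0,0], ![0,0,0,1,0,0], ![0,0,0,0,1,0], ![0,0,0,0,0,1]} :
        Set (Fin 6 → ℝ)) =
        Set.range ![Ycartan p, ![0,0,1,0,0,0], ![0,0,0,1,0,0], ![0,0,0,0,1,0], ![0,0,0,0,0,1]] := by
      ext x
      simp [Matrix.range_cons, Matrix.range_cons_empty]
      tauto
    rw [hr, finrank_span_eq_card ?_]
    · simp
    · rw [Fintype.linearIndependent_iff]
      intro g hg
      have h0 := congrFun hg 0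
      have h2 := congrFun hg 2
      have h3 := congrFun hg 3
      have h4 := congrFun hg 4
      have h5 := congrFun hg 5
      simp [Fin.sum_univ_five, Ycartan, v0, v1, v2, v3, v4, v5,
        Matrix.vecHead, Matrix.vecTail] at h0 h2 h3 h4 h5
      simp only [h0, zero_mul, zero_add] at h2 h3
      intro i
      fin_cases i
      · exact h0
      · exact h2
      · exact h3
      · exact h4
      · exact h5
  case part4 =>
    intro p
    rw [eq_top_iff]
    rintro w -
    set S := Submodule.span ℝ
      ({X1cartan p, X2cartan p, Ycartan p, vfLie X1cartan X2cartan p,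
        vfLie X1cartan Ycartan p, vfLie X2cartan Ycartan p,
        vfLie X1cartan (vfLie X1cartan X2cartan) p,
        vfLie X1cartan (vfLie X1cartan Ycartan) p,
        vfLie X1cartan (vfLie X2cartan Ycartan) p,
        vfLie X2cartan (vfLie X1cartan X2cartan) p,
        vfLie X2cartan (vfLie X1cartan Ycartan) p,
        vfLie X2cartan (vfLie X2cartan Ycartan) p,
        vfLie Ycartan (vfLie X1cartan X2cartan) p,
        vfLie Ycartan (vfLie X1cartan Ycartan) p,
        vfLie Ycartan (vfLie X2cartan Ycartan) p} : Set (Fin 6 → ℝ)) with hS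
    have hY : Ycartan p ∈ S := Submodule.subset_span (by simp)
    have hE4 : (![0,0,0,0,1,0] : Fin 6 → ℝ) ∈ S := by
      have : X1cartan p ∈ S := Submodule.subset_span (by simp)
      simpa [X1cartan] using this
    have hE5 : (![0,0,0,0,0,1] : Fin 6 → ℝ) ∈ S := by
      have : X2cartan p ∈ S := Submodule.subset_span (by simp)
      simpa [X2cartan] using this
    have hE3 : (![0,0,0,1,0,0] : Fin 6 → ℝ) ∈ S := by
      have : vfLie X1cartan Ycartan p ∈ S := Submodule.subset_span (by simp)
      simpa [hX1Y] using this
    have hE2 : (![0,0,1,0,0,0] : Fin 6 → ℝ) ∈ S := by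
      have : vfLie X2cartan Ycartan p ∈ S := Submodule.subset_span (by simp)
      simpa [hX2Y] using this
    have hE1 : (![0,1,0,0,0,0] : Fin 6 → ℝ) ∈ S := by
      have h : vfLie Ycartan (vfLie X1cartan Ycartan) p ∈ S := Submodule.subset_span (by simp)
      rw [hYX1Y] at h
      simpa using S.neg_mem h
    have hw : w = w 0 • Ycartan p + (w 1 - w 0 * p 3) • ![0,1,0,0,0,0]
        + (w 2 - w 0 * p 5) • ![0,0,1,0,0,0] + (w 3 - w 0 * p 4) • ![0,0,0,1,0,0]
        + w 4 • ![0,0,0,0,1,0] + w 5 • ![0,0,0,0,0,1] := by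
      funext i
      fin_cases i <;>
        simp [Ycartan, v0, v1, v2, v3, v4, v5] <;> ring
    rw [hw]
    exact S.add_mem (S.add_mem (S.add_mem (S.add_mem (S.add_mem
      (S.smul_mem _ hY) (S.smul_mem _ hE1)) (S.smul_mem _ hE2))
      (S.smul_mem _ hE3)) (S.smul_mem _ hE4)) (S.smul_mem _ hE5)
  case part5 =>
    have key : ∀ i j : Fin 2,
        vfLie (![X1cartan, X2cartan] i) (vfLie Ycartan (![X1cartan, X2cartan] j)) =
          fun _ => 0 := by
      intro i j
      fin_cases i <;> fin_cases j <;>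
        simp only [Matrix.cons_val_zero, Matrix.cons_val_one, Matrix.head_cons] <;>
        first
        | exact hX1_YX1 | exact hX1_YX2 | exact hX2_YX1 | exact hX2_YX2
    intro i j p
    simp only [key i j]
    exact Submodule.zero_mem _
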